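/- (a) If f, g ∈ 𝓕_n are monotone subtypes with O_f = O_g, then f∨g and f∧g are monotone subtypes. (b) If f ∈ 𝓕_m and g ∈ 𝓕_n are monotone subtypes and σ is a permutation of [m], then f∘σ, f*, f◁g, f⊗g and f⅋g are monotone subtypes. -/

import Mathlib

open Classical

namespace HOT

/-- Binary strings of length `n`, identified with `{0,1}^n`. -/
abbrev Str (n : ℕ) := Fin n → Bool

/-- The all-zeros string `θ`. -/
def theta (n : ℕ) : Str n := fun _ => false

/-- `𝓕_n`: boolean functions on `{0,1}^n` with `f(θ) = 1`. -/
def Fcal (n : ℕ) : Set (Str n → Bool) := {f | f (theta n) = true}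

/-- The complement `f* = 1 - f + p_n`. -/
noncomputable def star {n : ℕ} (f : Str n → Bool) : Str n → Bool :=
  fun s => if s = theta n then true else !(f s)

/-- First block `s¹` of a string `s ∈ {0,1}^{m+n}`. -/
def fstStr {m n : ℕ} (s : Str (m + n)) : Str m := fun i => s (Fin.castAdd n i)

/-- Second block `s²` of a string `s ∈ {0,1}^{m+n}`. -/
def sndStr {m n : ℕ} (s : Str (m + n)) : Str n := fun j => s (Fin.natAdd m j)

/-- Tensor product `(f ⊗ g)(s) = f(s¹) · g(s²)`. -/
noncomputable def tensor {m n : ℕ} (f : Str m → Bool) (g : Str n → Bool) :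
    Str (m + n) → Bool :=
  fun s => f (fstStr s) && g (sndStr s)

/-- `f ⅋ g := (f* ⊗ g*)*`. -/
noncomputable def parr {m n : ℕ} (f : Str m → Bool) (g : Str n → Bool) :
    Str (m + n) → Bool :=
  star (tensor (star f) (star g))

/-- The causal product `f ◁ g` (`f` on the first `m` bits, `g` on the last `n` bits):
`(f ◁ g)(s) = f(s¹)` if `s¹ ≠ θ_m`, else `g(s²)`. -/
noncomputable def causalL {m n : ℕ} (f : Str m → Bool) (g : Str n → Bool) :
    Str (m + n) → Bool :=
  fun s => if fstStr s = theta m then g (sndStr s) else f (fstStr s)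

/-- The causal product `g ◁ f` (`f` on the first `m` bits, `g` on the last `n` bits):
`(g ◁ f)(s) = g(s²)` if `s² ≠ θ_n`, else `f(s¹)`. -/
noncomputable def causalR {m n : ℕ} (f : Str m → Bool) (g : Str n → Bool) :
    Str (m + n) → Bool :=
  fun s => if sndStr s = theta n then f (fstStr s) else g (sndStr s)

/-- `p_T(s) = 1` iff `s_i = 0` for all `i ∈ T`. -/
noncomputable def pSet {n : ℕ} (T : Set (Fin n)) : Str n → Bool :=
  fun s => decide (∀ i ∈ T, s i = false)

/-- The string `e^i` with `1` exactly in position `i`. -/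
def eStr {n : ℕ} (i : Fin n) : Str n := fun j => decide (j = i)

/-- The string `e^{i,j}` with `1` exactly in positions `i` and `j`. -/
def e2Str {n : ℕ} (i j : Fin n) : Str n := fun l => decide (l = i ∨ l = j)

/-- Input indices `I_f = {i : f(e^i) = 0}`. -/
def Iset {n : ℕ} (f : Str n → Bool) : Set (Fin n) := {i | f (eStr i) = false}

/-- Output indices `O_f = {j : f(e^j) = 1}`. -/
def Oset {n : ℕ} (f : Str n → Bool) : Set (Fin n) := {j | f (eStr j) = true}

/-- `f` is a subtype if `p_{I_f} ≤ f ≤ (p_{O_f})*` pointwise. -/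
def IsSubtype {n : ℕ} (f : Str n → Bool) : Prop :=
  pSet (Iset f) ≤ f ∧ f ≤ star (pSet (Oset f))

/-- The partial order `≤_O`: `s ≤_O t` iff `s_i ≤ t_i` for `i ∈ O` and `s_i ≥ t_i` for
`i ∉ O`. -/
def leO {n : ℕ} (O : Set (Fin n)) (s t : Str n) : Prop :=
  ∀ i, (i ∈ O → s i ≤ t i) ∧ (i ∉ O → t i ≤ s i)

/-- `f` is monotone (with respect to `≤_{O_f}`). -/
def MonotoneF {n : ℕ} (f : Str n → Bool) : Prop :=
  ∀ s t, leO (Oset f) s t → f s ≤ f t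

/-- The action of a permutation on strings: `σ(s)_i = s_{σ⁻¹(i)}`. -/
def permAct {n : ℕ} (σ : Equiv.Perm (Fin n)) (s : Str n) : Str n := fun i => s (σ⁻¹ i)

/-- `(f ∘ σ)(s) = f(σ(s))`. -/
def permComp {n : ℕ} (f : Str n → Bool) (σ : Equiv.Perm (Fin n)) : Str n → Bool :=
  fun s => f (permAct σ s)

/-- The inductively defined family `𝓣_n` of type functions. -/
inductive IsType : (n : ℕ) → (Str n → Bool) → Prop
  | one : IsType 1 (fun _ => true)
  | dual {n : ℕ} {f : Str n → Bool} : IsType n f → IsType n (star f)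
  | perm {n : ℕ} {f : Str n → Bool} (σ : Equiv.Perm (Fin n)) :
      IsType n f → IsType n (permComp f σ)
  | tens {m n : ℕ} {f : Str m → Bool} {g : Str n → Bool} :
      IsType m f → IsType n g → IsType (m + n) (tensor f g)

/-- Interpretation of a bit as an integer. -/
def toZ (b : Bool) : ℤ := (b.toNat : ℤ)

/-- `f` is a chain type: `f = Σ_{i=0}^N (-1)^i p_{S_i}` for a strictly increasing chain
`S_0 ⊊ ⋯ ⊊ S_N ⊆ [n]` with `N` even. -/
def IsChainType {n : ℕ} (f : Str n → Bool) : Prop :=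
  ∃ N : ℕ, Even N ∧ ∃ S : Fin (N + 1) → Set (Fin n), StrictMono S ∧
    ∀ s : Str n, toZ (f s) = ∑ i : Fin (N + 1), (-1 : ℤ) ^ (i : ℕ) * toZ (pSet (S i) s)

/-- The Möbius transform `f̂_T`. -/
noncomputable def mobius {n : ℕ} (f : Str n → Bool) (T : Set (Fin n)) : ℤ :=
  ∑ s : Str n, if ∀ j, j ∉ T → s j = true then
    (-1 : ℤ) ^ (∑ j : Fin n, if j ∈ T then (s j).toNat else 0) * toZ (f s)
  else 0

/-- The structure poset `𝓟_f = {T ⊆ [n] : f̂_T ≠ 0}`, ordered by inclusion. -/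
noncomputable def structPoset {n : ℕ} (f : Str n → Bool) : Set (Set (Fin n)) :=
  {T | mobius f T ≠ 0}

/-- The label set `L_T = T ∖ ⋃ {S ∈ 𝓟_f : S ⊊ T}`. -/
noncomputable def labels {n : ℕ} (f : Str n → Bool) (T : Set (Fin n)) : Set (Fin n) :=
  T \ ⋃₀ {S | S ∈ structPoset f ∧ S ⊂ T}

/-- The reduced structure poset `𝓟_f^0`: `∅` (if `∅ ∈ 𝓟_f`) together with all
`T ∈ 𝓟_f` with `L_T ≠ ∅`. -/
noncomputable def reducedPoset {n : ℕ} (f : Str n → Bool) : Set (Set (Fin n)) :=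
  {T | T ∈ structPoset f ∧ (T = ∅ ∨ labels f T ≠ ∅)}

/-- The rank `ρ_f(T)`: the length of a longest chain in `𝓟_f` with top element `T`
(this is the length of any maximal such chain in the graded poset `𝓟_f`). -/
noncomputable def rank {n : ℕ} (f : Str n → Bool) (T : Set (Fin n)) : ℕ :=
  sSup {k | ∃ c : Fin (k + 1) → Set (Fin n), StrictMono c ∧
    (∀ i, c i ∈ structPoset f) ∧ c (Fin.last k) = T}

/-- The rank `r(f)` of the whole poset `𝓟_f`: the common length of its maximal chains. -/
noncomputable def rk {n : ℕ} (f : Str n → Bool) : ℕ :=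
  sSup {k | ∃ c : Fin (k + 1) → Set (Fin n), StrictMono c ∧ ∀ i, c i ∈ structPoset f}

/-- `𝕋_i^f = {T ∈ 𝓟_f : i ∈ L_T}`. -/
noncomputable def Tset {n : ℕ} (f : Str n → Bool) (i : Fin n) : Set (Set (Fin n)) :=
  {T | T ∈ structPoset f ∧ i ∈ labels f T}

/-- The rank `r_f(i)` of an index: the common rank of elements of `𝕋_i^f`, or `r(f)+1`
if `𝕋_i^f = ∅` (a free output). -/
noncomputable def idxRank {n : ℕ} (f : Str n → Bool) (i : Fin n) : ℕ :=
  if (Tset f i).Nonempty then sSup (rank f '' Tset f i) else rk f + 1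

/-- `X` is the greatest lower bound of `S` and `T` in the poset `(P, ⊆)`. -/
def IsGLBIn {n : ℕ} (P : Set (Set (Fin n))) (S T X : Set (Fin n)) : Prop :=
  X ∈ P ∧ X ⊆ S ∧ X ⊆ T ∧ ∀ Y ∈ P, Y ⊆ S → Y ⊆ T → Y ⊆ X

/-- `X` is the least upper bound of `S` and `T` in the poset `(P, ⊆)`. -/
def IsLUBIn {n : ℕ} (P : Set (Set (Fin n))) (S T X : Set (Fin n)) : Prop :=
  X ∈ P ∧ S ⊆ X ∧ T ⊆ X ∧ ∀ Y ∈ P, S ⊆ Y → T ⊆ Y → X ⊆ Y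

/-- `S^↓`: the downset generated by `S` in `𝓟_f^0`. -/
noncomputable def downSet {n : ℕ} (f : Str n → Bool) (S : Set (Fin n)) :
    Set (Set (Fin n)) :=
  {X | X ∈ reducedPoset f ∧ X ⊆ S}

/-- `S^↑`: the upset generated by `S` in `𝓟_f^0`. -/
noncomputable def upSet {n : ℕ} (f : Str n → Bool) (S : Set (Fin n)) :
    Set (Set (Fin n)) :=
  {X | X ∈ reducedPoset f ∧ S ⊆ X}

/-- The pair rank `r_f(i,j)`: `max{ρ_f(S ∧ T) : S ∈ 𝕋_i^f, T ∈ 𝕋_j^f, S ∧ T exists in 𝓟_f}`;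
`-1` if this set is empty, unless `i` or `j` is a free output, in which case it is
`min{r_f(i), r_f(j)}`. -/
noncomputable def pairRank {n : ℕ} (f : Str n → Bool) (i j : Fin n) : ℤ :=
  if _h : ∃ r : ℤ, ∃ S ∈ Tset f i, ∃ T ∈ Tset f j, ∃ X, IsGLBIn (structPoset f) S T X ∧
      r = (rank f X : ℤ) then
    sSup {r : ℤ | ∃ S ∈ Tset f i, ∃ T ∈ Tset f j, ∃ X, IsGLBIn (structPoset f) S T X ∧
      r = (rank f X : ℤ)}
  else if Tset f i = ∅ ∨ Tset f j = ∅ then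
    min (idxRank f i : ℤ) (idxRank f j : ℤ)
  else -1

/-- Membership in the sublattice generated by a set `S`. -/
inductive InLatGen {α : Type*} [Lattice α] (S : Set α) : α → Prop
  | base {a : α} : a ∈ S → InLatGen S a
  | sup {a b : α} : InLatGen S a → InLatGen S b → InLatGen S (a ⊔ b)
  | inf {a b : α} : InLatGen S a → InLatGen S b → InLatGen S (a ⊓ b)

/-- For `s ≰_O θ`, `f_s` is the function with support `U_s ∪ U_θ` (w.r.t. `≤_O`). -/
noncomputable def fStr {n : ℕ} (O : Set (Fin n)) (s : Str n) : Str n → Bool :=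
  fun t => decide (leO O s t ∨ leO O (theta n) t)

/-- A string `s ∉ D_θ ∪ U_θ` is basic (for `≤_O`) if `s_j = 1` for exactly one `j ∈ O`
and `s_i = 0` for at most one `i ∈ I = Oᶜ`. -/
def IsBasic {n : ℕ} (O : Set (Fin n)) (s : Str n) : Prop :=
  ¬ leO O s (theta n) ∧ ¬ leO O (theta n) s ∧
  (∃! j, j ∈ O ∧ s j = true) ∧
  (∀ i i', i ∈ Oᶜ → i' ∈ Oᶜ → s i = false → s i' = false → i = i')

section Helpers

lemma bool_le_iff {a b : Bool} : a ≤ b ↔ (a = true → b = true) := by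
  cases a <;> cases b <;> simp

lemma eStr_ne_theta {n : ℕ} (i : Fin n) : eStr i ≠ theta n := by
  intro h
  have := congrFun h i
  simp [eStr, theta] at this

lemma pSet_eq_true {n : ℕ} {T : Set (Fin n)} {s : Str n} :
    pSet T s = true ↔ ∀ i ∈ T, s i = false := by simp [pSet]

lemma star_eq_true {n : ℕ} {f : Str n → Bool} {s : Str n} :
    star f s = true ↔ (s = theta n ∨ f s = false) := by
  unfold star; split <;> simp_all

lemma mem_Iset_iff {n : ℕ} {f : Str n → Bool} {i : Fin n} :
    i ∈ Iset f ↔ i ∉ Oset f := by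
  simp [Iset, Oset]

/-- Condition (A) of subtypes. -/
def CondA {n : ℕ} (f : Str n → Bool) : Prop :=
  ∀ s : Str n, (∀ i ∈ Iset f, s i = false) → f s = true

/-- Condition (B) of subtypes. -/
def CondB {n : ℕ} (f : Str n → Bool) : Prop :=
  ∀ s : Str n, s ≠ theta n → f s = true → ∃ j ∈ Oset f, s j = true

lemma isSubtype_iff {n : ℕ} (f : Str n → Bool) :
    IsSubtype f ↔ CondA f ∧ CondB f := by
  constructor
  · rintro ⟨h1, h2⟩
    constructor
    · intro s hs
      have := h1 s
      rw [bool_le_iff] at this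
      exact this (pSet_eq_true.2 hs)
    · intro s hs hfs
      have := h2 s
      rw [bool_le_iff] at this
      have h3 := this hfs
      rw [star_eq_true] at h3
      rcases h3 with h3 | h3
      · exact absurd h3 hs
      · by_contra hc
        push_neg at hc
        have : pSet (Oset f) s = true := pSet_eq_true.2 (fun j hj => by
          have := hc j hj
          cases hsj : s j
          · rfl
          · exact absurd hsj this)
        rw [this] at h3; simp at h3
  · rintro ⟨hA, hB⟩
    constructor
    · intro s
      rw [bool_le_iff]
      intro hp
      exact hA s (pSet_eq_true.1 hp)
    · intro s
      rw [bool_le_iff]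
      intro hfs
      rw [star_eq_true]
      by_cases hs : s = theta n
      · exact Or.inl hs
      · right
        obtain ⟨j, hj, hsj⟩ := hB s hs hfs
        cases hp : pSet (Oset f) s
        · rfl
        · have := pSet_eq_true.1 hp j hj
          rw [hsj] at this; simp at this

end Helpers
section Helpers2

lemma fstStr_eStr_castAdd {m n : ℕ} (j : Fin m) :
    fstStr (m := m) (n := n) (eStr (Fin.castAdd n j)) = eStr j := by
  funext i; simp [fstStr, eStr, Fin.ext_iff]

lemma sndStr_eStr_castAdd {m n : ℕ} (j : Fin m) :
    sndStr (m := m) (n := n) (eStr (Fin.castAdd n j)) = theta n := by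
  funext i; simp [sndStr, eStr, theta, Fin.ext_iff]; omega

lemma fstStr_eStr_natAdd {m n : ℕ} (j : Fin n) :
    fstStr (m := m) (n := n) (eStr (Fin.natAdd m j)) = theta m := by
  funext i; simp [fstStr, eStr, theta, Fin.ext_iff]; omega

lemma sndStr_eStr_natAdd {m n : ℕ} (j : Fin n) :
    sndStr (m := m) (n := n) (eStr (Fin.natAdd m j)) = eStr j := by
  funext i; simp [sndStr, eStr, Fin.ext_iff]

lemma fstStr_theta {m n : ℕ} : fstStr (m := m) (n := n) (theta (m + n)) = theta m := rfl

lemma sndStr_theta {m n : ℕ} : sndStr (m := m) (n := n) (theta (m + n)) = theta n := rfl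

lemma theta_split {m n : ℕ} {s : Str (m + n)} :
    s = theta (m + n) ↔ fstStr s = theta m ∧ sndStr s = theta n := by
  constructor
  · rintro rfl; exact ⟨rfl, rfl⟩
  · rintro ⟨h1, h2⟩
    funext k
    refine Fin.addCases (fun i => ?_) (fun j => ?_) k
    · exact congrFun h1 i
    · exact congrFun h2 j

end Helpers2
section Closures

lemma sup_apply_true {n : ℕ} {f g : Str n → Bool} {s : Str n} :
    (f ⊔ g) s = true ↔ f s = true ∨ g s = true := by
  show (f s ⊔ g s) = true ↔ _
  cases f s <;> cases g s <;> simp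

lemma inf_apply_true {n : ℕ} {f g : Str n → Bool} {s : Str n} :
    (f ⊓ g) s = true ↔ f s = true ∧ g s = true := by
  show (f s ⊓ g s) = true ↔ _
  cases f s <;> cases g s <;> simp

lemma parta {n : ℕ} {f g : Str n → Bool}
    (hsf : IsSubtype f) (hmf : MonotoneF f) (hsg : IsSubtype g) (hmg : MonotoneF g)
    (hO : Oset f = Oset g) :
    (IsSubtype (f ⊔ g) ∧ MonotoneF (f ⊔ g)) ∧
    (IsSubtype (f ⊓ g) ∧ MonotoneF (f ⊓ g)) := by
  obtain ⟨hAf, hBf⟩ := (isSubtype_iff f).1 hsf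
  obtain ⟨hAg, hBg⟩ := (isSubtype_iff g).1 hsg
  have hOsup : Oset (f ⊔ g) = Oset f := by
    ext i
    show (f ⊔ g) (eStr i) = true ↔ f (eStr i) = true
    rw [sup_apply_true]
    constructor
    · rintro (h | h)
      · exact h
      · have hg : i ∈ Oset g := h
        rw [← hO] at hg; exact hg
    · intro h; exact Or.inl h
  have hOinf : Oset (f ⊓ g) = Oset f := by
    ext i
    show (f ⊓ g) (eStr i) = true ↔ f (eStr i) = true
    rw [inf_apply_true]
    constructor
    · rintro ⟨h, _⟩; exact h
    · intro h
      refine ⟨h, ?_⟩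
      have hg : i ∈ Oset g := by rw [← hO]; exact (h : i ∈ Oset f)
      exact hg
  have hIsup : Iset (f ⊔ g) = Iset f := by
    ext i; rw [mem_Iset_iff, mem_Iset_iff, hOsup]
  have hIinf : Iset (f ⊓ g) = Iset f := by
    ext i; rw [mem_Iset_iff, mem_Iset_iff, hOinf]
  have hlesup : ∀ s t : Str n, leO (Oset (f ⊔ g)) s t → leO (Oset f) s t ∧ leO (Oset g) s t := by
    intro s t h
    rw [hOsup] at h
    exact ⟨h, hO ▸ h⟩
  have hleinf : ∀ s t : Str n, leO (Oset (f ⊓ g)) s t → leO (Oset f) s t ∧ leO (Oset g) s t := by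
    intro s t h
    rw [hOinf] at h
    exact ⟨h, hO ▸ h⟩
  refine ⟨⟨(isSubtype_iff _).2 ⟨?_, ?_⟩, ?_⟩, (isSubtype_iff _).2 ⟨?_, ?_⟩, ?_⟩
  · -- CondA sup
    intro s hs
    rw [hIsup] at hs
    exact sup_apply_true.2 (Or.inl (hAf s hs))
  · -- CondB sup
    intro s hne h
    rcases sup_apply_true.1 h with h | h
    · obtain ⟨j, hj, hsj⟩ := hBf s hne h
      exact ⟨j, hOsup ▸ hj, hsj⟩
    · obtain ⟨j, hj, hsj⟩ := hBg s hne h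
      refine ⟨j, ?_, hsj⟩
      rw [hOsup, hO]; exact hj
  · -- Monotone sup
    intro s t hle
    obtain ⟨h1, h2⟩ := hlesup s t hle
    rw [bool_le_iff]
    intro h
    rcases sup_apply_true.1 h with h | h
    · exact sup_apply_true.2 (Or.inl (bool_le_iff.1 (hmf s t h1) h))
    · exact sup_apply_true.2 (Or.inr (bool_le_iff.1 (hmg s t h2) h))
  · -- CondA inf
    intro s hs
    rw [hIinf] at hs
    have hs' : ∀ i ∈ Iset g, s i = false := by
      intro i hi
      apply hs
      rw [mem_Iset_iff, hO, ← mem_Iset_iff]; exact hi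
    exact inf_apply_true.2 ⟨hAf s hs, hAg s hs'⟩
  · -- CondB inf
    intro s hne h
    obtain ⟨h1, _⟩ := inf_apply_true.1 h
    obtain ⟨j, hj, hsj⟩ := hBf s hne h1
    exact ⟨j, hOinf ▸ hj, hsj⟩
  · -- Monotone inf
    intro s t hle
    obtain ⟨h1, h2⟩ := hleinf s t hle
    rw [bool_le_iff]
    intro h
    obtain ⟨ha, hb⟩ := inf_apply_true.1 h
    exact inf_apply_true.2 ⟨bool_le_iff.1 (hmf s t h1) ha, bool_le_iff.1 (hmg s t h2) hb⟩

lemma star_closed {n : ℕ} {f : Str n → Bool} (hf : f ∈ Fcal n)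
    (hsf : IsSubtype f) (hmf : MonotoneF f) :
    star f ∈ Fcal n ∧ IsSubtype (star f) ∧ MonotoneF (star f) := by
  obtain ⟨hA, hB⟩ := (isSubtype_iff f).1 hsf
  have hOs : Oset (star f) = Iset f := by
    ext i
    simp only [Oset, Iset, Set.mem_setOf_eq, star, if_neg (eStr_ne_theta i)]
    cases f (eStr i) <;> simp
  have hIs : Iset (star f) = Oset f := by
    ext i
    simp only [Oset, Iset, Set.mem_setOf_eq, star, if_neg (eStr_ne_theta i)]
    cases f (eStr i) <;> simp
  refine ⟨if_pos rfl, (isSubtype_iff _).2 ⟨?_, ?_⟩, ?_⟩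
  · -- CondA
    intro s hs
    rw [hIs] at hs
    rw [star_eq_true]
    rcases eq_or_ne s (theta n) with h | h
    · exact Or.inl h
    · right
      rcases Bool.eq_false_or_eq_true (f s) with hfs | hfs
      · exfalso
        obtain ⟨j, hj, hsj⟩ := hB s h hfs
        rw [hs j hj] at hsj
        exact Bool.false_ne_true hsj
      · exact hfs
  · -- CondB
    intro s hne h
    rw [star_eq_true] at h
    rcases h with h | h
    · exact absurd h hne
    · by_contra hc
      push_neg at hc
      have hs' : ∀ i ∈ Iset f, s i = false := by
        intro i hi
        have := hc i (by rw [hOs]; exact hi)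
        cases hsi : s i
        · rfl
        · exact absurd hsi this
      have hAs := hA s hs'
      rw [hAs] at h
      exact absurd h (by decide)
  · -- Monotone
    intro s t hle
    rw [hOs] at hle
    rw [bool_le_iff, star_eq_true, star_eq_true]
    rintro (rfl | hfs)
    · rcases eq_or_ne t (theta n) with ht | ht
      · exact Or.inl ht
      · right
        rcases Bool.eq_false_or_eq_true (f t) with h | h
        · exfalso
          obtain ⟨j, hj, htj⟩ := hB t ht h
          have hjn : j ∉ Iset f := fun hc => (mem_Iset_iff.1 hc) hj
          have hc := (hle j).2 hjn
          rw [htj] at hc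
          exact absurd hc (by simp [theta])
        · exact h
    · rcases eq_or_ne t (theta n) with ht | ht
      · exact Or.inl ht
      · right
        have hle' : leO (Oset f) t s := by
          intro i
          refine ⟨fun hi => (hle i).2 (fun hc => (mem_Iset_iff.1 hc) hi),
                  fun hi => (hle i).1 (mem_Iset_iff.2 hi)⟩
        have hle2 := hmf t s hle'
        rw [hfs] at hle2
        cases hft : f t
        · rfl
        · rw [hft] at hle2; exact absurd hle2 (by decide)

end Closures
section Closures2

lemma permAct_eStr {n : ℕ} (σ : Equiv.Perm (Fin n)) (i : Fin n) :
    permAct σ (eStr i) = eStr (σ i) := by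
  funext j
  simp only [permAct, eStr, decide_eq_decide]
  rw [Equiv.Perm.inv_def, Equiv.symm_apply_eq]

lemma permAct_eq_theta {n : ℕ} (σ : Equiv.Perm (Fin n)) (s : Str n) :
    permAct σ s = theta n ↔ s = theta n := by
  constructor
  · intro h
    funext i
    have := congrFun h (σ i)
    simpa [permAct, theta] using this
  · rintro rfl; rfl

lemma mem_Oset_perm {n : ℕ} {f : Str n → Bool} {σ : Equiv.Perm (Fin n)} {i : Fin n} :
    i ∈ Oset (permComp f σ) ↔ σ i ∈ Oset f := by
  show permComp f σ (eStr i) = true ↔ f (eStr (σ i)) = true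
  rw [permComp, permAct_eStr]

lemma perm_closed {n : ℕ} {f : Str n → Bool} (hf : f ∈ Fcal n)
    (hsf : IsSubtype f) (hmf : MonotoneF f) (σ : Equiv.Perm (Fin n)) :
    permComp f σ ∈ Fcal n ∧ IsSubtype (permComp f σ) ∧ MonotoneF (permComp f σ) := by
  obtain ⟨hA, hB⟩ := (isSubtype_iff f).1 hsf
  refine ⟨hf, (isSubtype_iff _).2 ⟨?_, ?_⟩, ?_⟩
  · -- CondA
    intro s hs
    show f (permAct σ s) = true
    apply hA
    intro j hj
    show s (σ⁻¹ j) = false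
    apply hs
    rw [mem_Iset_iff, mem_Oset_perm, Equiv.Perm.inv_def, Equiv.apply_symm_apply, ← mem_Iset_iff]
    exact hj
  · -- CondB
    intro s hne h
    have h' : f (permAct σ s) = true := h
    have hne' : permAct σ s ≠ theta n := fun hc => hne ((permAct_eq_theta σ s).1 hc)
    obtain ⟨j, hj, hsj⟩ := hB _ hne' h'
    refine ⟨σ⁻¹ j, ?_, hsj⟩
    rw [mem_Oset_perm, Equiv.Perm.inv_def, Equiv.apply_symm_apply]
    exact hj
  · -- Monotone
    intro s t hle
    show f (permAct σ s) ≤ f (permAct σ t)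
    apply hmf
    intro j
    constructor
    · intro hj
      have : σ⁻¹ j ∈ Oset (permComp f σ) := by
        rw [mem_Oset_perm, Equiv.Perm.inv_def, Equiv.apply_symm_apply]; exact hj
      exact (hle (σ⁻¹ j)).1 this
    · intro hj
      have : σ⁻¹ j ∉ Oset (permComp f σ) := by
        rw [mem_Oset_perm, Equiv.Perm.inv_def, Equiv.apply_symm_apply]; exact hj
      exact (hle (σ⁻¹ j)).2 this

lemma mem_Oset_causalL_cast {m n : ℕ} {f : Str m → Bool} {g : Str n → Bool} (j : Fin m) :
    Fin.castAdd n j ∈ Oset (causalL f g) ↔ j ∈ Oset f := by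
  show causalL f g (eStr (Fin.castAdd n j)) = true ↔ f (eStr j) = true
  simp only [causalL]
  rw [fstStr_eStr_castAdd, if_neg (eStr_ne_theta j)]

lemma mem_Oset_causalL_nat {m n : ℕ} {f : Str m → Bool} {g : Str n → Bool} (j : Fin n) :
    Fin.natAdd m j ∈ Oset (causalL f g) ↔ j ∈ Oset g := by
  show causalL f g (eStr (Fin.natAdd m j)) = true ↔ g (eStr j) = true
  simp only [causalL]
  rw [fstStr_eStr_natAdd, if_pos rfl, sndStr_eStr_natAdd]

lemma causalL_closed {m n : ℕ} {f : Str m → Bool} {g : Str n → Bool}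
    (hf : f ∈ Fcal m) (hg : g ∈ Fcal n)
    (hsf : IsSubtype f) (hmf : MonotoneF f) (hsg : IsSubtype g) (hmg : MonotoneF g) :
    causalL f g ∈ Fcal (m + n) ∧ IsSubtype (causalL f g) ∧ MonotoneF (causalL f g) := by
  obtain ⟨hAf, hBf⟩ := (isSubtype_iff f).1 hsf
  obtain ⟨hAg, hBg⟩ := (isSubtype_iff g).1 hsg
  have hFc : causalL f g ∈ Fcal (m + n) := by
    show causalL f g (theta (m + n)) = true
    simp only [causalL]
    rw [fstStr_theta, if_pos rfl, sndStr_theta]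
    exact hg
  refine ⟨hFc, (isSubtype_iff _).2 ⟨?_, ?_⟩, ?_⟩
  · -- CondA
    intro s hs
    show (if fstStr s = theta m then g (sndStr s) else f (fstStr s)) = true
    by_cases h1 : fstStr s = theta m
    · rw [if_pos h1]
      apply hAg
      intro j hj
      exact hs (Fin.natAdd m j)
        (mem_Iset_iff.2 (fun hc => (mem_Iset_iff.1 hj) ((mem_Oset_causalL_nat j).1 hc)))
    · rw [if_neg h1]
      apply hAf
      intro i hi
      exact hs (Fin.castAdd n i)
        (mem_Iset_iff.2 (fun hc => (mem_Iset_iff.1 hi) ((mem_Oset_causalL_cast i).1 hc)))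
  · -- CondB
    intro s hne h
    have h' : (if fstStr s = theta m then g (sndStr s) else f (fstStr s)) = true := h
    by_cases h1 : fstStr s = theta m
    · rw [if_pos h1] at h'
      have h2 : sndStr s ≠ theta n := fun hc => hne (theta_split.2 ⟨h1, hc⟩)
      obtain ⟨j, hj, hsj⟩ := hBg _ h2 h'
      exact ⟨Fin.natAdd m j, (mem_Oset_causalL_nat j).2 hj, hsj⟩
    · rw [if_neg h1] at h'
      obtain ⟨j, hj, hsj⟩ := hBf _ h1 h'
      exact ⟨Fin.castAdd n j, (mem_Oset_causalL_cast j).2 hj, hsj⟩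
  · -- Monotone
    intro s t hle
    have hlef : leO (Oset f) (fstStr s) (fstStr t) := by
      intro i
      refine ⟨fun hi => (hle _).1 ((mem_Oset_causalL_cast i).2 hi),
              fun hi => (hle _).2 (fun hc => hi ((mem_Oset_causalL_cast i).1 hc))⟩
    have hleg : leO (Oset g) (sndStr s) (sndStr t) := by
      intro j
      refine ⟨fun hj => (hle _).1 ((mem_Oset_causalL_nat j).2 hj),
              fun hj => (hle _).2 (fun hc => hj ((mem_Oset_causalL_nat j).1 hc))⟩
    rw [bool_le_iff]
    intro hs1
    have hs1' : (if fstStr s = theta m then g (sndStr s) else f (fstStr s)) = true := hs1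
    show (if fstStr t = theta m then g (sndStr t) else f (fstStr t)) = true
    by_cases h1 : fstStr s = theta m <;> by_cases h2 : fstStr t = theta m
    · rw [if_pos h1] at hs1'
      rw [if_pos h2]
      exact bool_le_iff.1 (hmg _ _ hleg) hs1'
    · rw [if_neg h2]
      apply hAf
      intro i hi
      have hti := (hlef i).2 (mem_Iset_iff.1 hi)
      rw [h1] at hti
      have : fstStr t i ≤ false := hti
      exact le_antisymm this (by simp)
    · exfalso
      rw [if_neg h1] at hs1'
      obtain ⟨j, hj, hsj⟩ := hBf _ h1 hs1'
      have := (hlef j).1 hj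
      rw [hsj, h2] at this
      exact absurd this (by simp [theta])
    · rw [if_neg h1] at hs1'
      rw [if_neg h2]
      exact bool_le_iff.1 (hmf _ _ hlef) hs1'

lemma mem_Oset_tensor_cast {m n : ℕ} {f : Str m → Bool} {g : Str n → Bool}
    (hg : g ∈ Fcal n) (j : Fin m) :
    Fin.castAdd n j ∈ Oset (tensor f g) ↔ j ∈ Oset f := by
  show tensor f g (eStr (Fin.castAdd n j)) = true ↔ f (eStr j) = true
  simp only [tensor]
  rw [fstStr_eStr_castAdd, sndStr_eStr_castAdd, hg, Bool.and_true]

lemma mem_Oset_tensor_nat {m n : ℕ} {f : Str m → Bool} {g : Str n → Bool}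
    (hf : f ∈ Fcal m) (j : Fin n) :
    Fin.natAdd m j ∈ Oset (tensor f g) ↔ j ∈ Oset g := by
  show tensor f g (eStr (Fin.natAdd m j)) = true ↔ g (eStr j) = true
  simp only [tensor]
  rw [fstStr_eStr_natAdd, sndStr_eStr_natAdd, hf, Bool.true_and]

lemma tensor_closed {m n : ℕ} {f : Str m → Bool} {g : Str n → Bool}
    (hf : f ∈ Fcal m) (hg : g ∈ Fcal n)
    (hsf : IsSubtype f) (hmf : MonotoneF f) (hsg : IsSubtype g) (hmg : MonotoneF g) :
    tensor f g ∈ Fcal (m + n) ∧ IsSubtype (tensor f g) ∧ MonotoneF (tensor f g) := by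
  obtain ⟨hAf, hBf⟩ := (isSubtype_iff f).1 hsf
  obtain ⟨hAg, hBg⟩ := (isSubtype_iff g).1 hsg
  have hFc : tensor f g ∈ Fcal (m + n) := by
    show (f (fstStr (theta (m + n))) && g (sndStr (theta (m + n)))) = true
    rw [fstStr_theta, sndStr_theta, hf, hg]
    rfl
  refine ⟨hFc, (isSubtype_iff _).2 ⟨?_, ?_⟩, ?_⟩
  · -- CondA
    intro s hs
    show (f (fstStr s) && g (sndStr s)) = true
    rw [Bool.and_eq_true]
    constructor
    · apply hAf
      intro i hi
      exact hs (Fin.castAdd n i)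
        (mem_Iset_iff.2 (fun hc => (mem_Iset_iff.1 hi) ((mem_Oset_tensor_cast hg i).1 hc)))
    · apply hAg
      intro j hj
      exact hs (Fin.natAdd m j)
        (mem_Iset_iff.2 (fun hc => (mem_Iset_iff.1 hj) ((mem_Oset_tensor_nat hf j).1 hc)))
  · -- CondB
    intro s hne h
    have h' : (f (fstStr s) && g (sndStr s)) = true := h
    rw [Bool.and_eq_true] at h'
    by_cases h1 : fstStr s = theta m
    · have h2 : sndStr s ≠ theta n := fun hc => hne (theta_split.2 ⟨h1, hc⟩)
      obtain ⟨j, hj, hsj⟩ := hBg _ h2 h'.2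
      exact ⟨Fin.natAdd m j, (mem_Oset_tensor_nat hf j).2 hj, hsj⟩
    · obtain ⟨j, hj, hsj⟩ := hBf _ h1 h'.1
      exact ⟨Fin.castAdd n j, (mem_Oset_tensor_cast hg j).2 hj, hsj⟩
  · -- Monotone
    intro s t hle
    have hlef : leO (Oset f) (fstStr s) (fstStr t) := by
      intro i
      refine ⟨fun hi => (hle _).1 ((mem_Oset_tensor_cast hg i).2 hi),
              fun hi => (hle _).2 (fun hc => hi ((mem_Oset_tensor_cast hg i).1 hc))⟩
    have hleg : leO (Oset g) (sndStr s) (sndStr t) := by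
      intro j
      refine ⟨fun hj => (hle _).1 ((mem_Oset_tensor_nat hf j).2 hj),
              fun hj => (hle _).2 (fun hc => hj ((mem_Oset_tensor_nat hf j).1 hc))⟩
    rw [bool_le_iff]
    intro hs1
    have h' : (f (fstStr s) && g (sndStr s)) = true := hs1
    rw [Bool.and_eq_true] at h'
    show (f (fstStr t) && g (sndStr t)) = true
    rw [Bool.and_eq_true]
    exact ⟨bool_le_iff.1 (hmf _ _ hlef) h'.1, bool_le_iff.1 (hmg _ _ hleg) h'.2⟩

end Closures2
/-- (a) monotone subtypes with equal output sets are closed under `∨`, `∧`;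
(b) monotone subtypes are closed under permutations, complement, causal product,
tensor product and `⅋`. -/
theorem stmt9 :
    (∀ (n : ℕ) (f g : Str n → Bool), f ∈ Fcal n → g ∈ Fcal n →
      IsSubtype f → MonotoneF f → IsSubtype g → MonotoneF g → Oset f = Oset g →
      (IsSubtype (f ⊔ g) ∧ MonotoneF (f ⊔ g)) ∧
      (IsSubtype (f ⊓ g) ∧ MonotoneF (f ⊓ g))) ∧
    (∀ (m n : ℕ) (f : Str m → Bool) (g : Str n → Bool), f ∈ Fcal m → g ∈ Fcal n →
      IsSubtype f → MonotoneF f → IsSubtype g → MonotoneF g →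
      ∀ σ : Equiv.Perm (Fin m),
      (IsSubtype (permComp f σ) ∧ MonotoneF (permComp f σ)) ∧
      (IsSubtype (star f) ∧ MonotoneF (star f)) ∧
      (IsSubtype (causalL f g) ∧ MonotoneF (causalL f g)) ∧
      (IsSubtype (tensor f g) ∧ MonotoneF (tensor f g)) ∧
      (IsSubtype (parr f g) ∧ MonotoneF (parr f g))) := by
  constructor
  · intro n f g _ _ hsf hmf hsg hmg hO
    exact parta hsf hmf hsg hmg hO
  · intro m n f g hf hg hsf hmf hsg hmg σ
    obtain ⟨_, hp1, hp2⟩ := perm_closed hf hsf hmf σ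
    obtain ⟨hfs1, hfs2, hfs3⟩ := star_closed hf hsf hmf
    obtain ⟨hgs1, hgs2, hgs3⟩ := star_closed hg hsg hmg
    obtain ⟨_, hc1, hc2⟩ := causalL_closed hf hg hsf hmf hsg hmg
    obtain ⟨_, ht1, ht2⟩ := tensor_closed hf hg hsf hmf hsg hmg
    obtain ⟨hts1, hts2, hts3⟩ := tensor_closed hfs1 hgs1 hfs2 hfs3 hgs2 hgs3
    obtain ⟨_, hps1, hps2⟩ := star_closed hts1 hts2 hts3
    exact ⟨⟨hp1, hp2⟩, ⟨hfs2, hfs3⟩, ⟨hc1, hc2⟩, ⟨ht1, ht2⟩, ⟨hps1, hps2⟩⟩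

end HOT
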